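/- arXiv:2206.04036 — 3 statements merged into one kernel-verified Lean document; each statement's English description precedes it below -/
import Mathlib

section
/- For all integers s, t ≥ 2, the set Ω_{s,t} of realizable pairs of independent-set and clique densities is a compact subset of [0,1]². -/
open Filter Topology

/-- `kcount t G` is the number of `t`-element vertex subsets of `G` inducing a clique,
i.e. the number of copies of `K_t` in `G`. -/
noncomputable def kcount {V : Type*} (t : ℕ) (G : SimpleGraph V) : ℕ :=
  Nat.card {s : Finset V // G.IsNClique t s}

/-- `OmegaST s t` is the set of pairs `(x, y)` such that some sequence of graphs `G n`
on `n` vertices has independent-`s`-set density tending to `x` and `K_t`-density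
tending to `y`. -/
def OmegaST (s t : ℕ) : Set (ℝ × ℝ) :=
  {p | ∃ G : (n : ℕ) → SimpleGraph (Fin n),
    Filter.Tendsto (fun n : ℕ => (kcount s (G n)ᶜ : ℝ) / (n.choose s : ℝ))
      Filter.atTop (nhds p.1) ∧
    Filter.Tendsto (fun n : ℕ => (kcount t (G n) : ℝ) / (n.choose t : ℝ))
      Filter.atTop (nhds p.2)}

/-- The pair of densities of a single graph. -/
noncomputable def gval (s t n : ℕ) (G : SimpleGraph (Fin n)) : ℝ × ℝ :=
  ((kcount s Gᶜ : ℝ) / (n.choose s : ℝ), (kcount t G : ℝ) / (n.choose t : ℝ))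

lemma kcount_le (t n : ℕ) (G : SimpleGraph (Fin n)) : kcount t G ≤ n.choose t := by
  have h : kcount t G ≤ Nat.card {s : Finset (Fin n) // s.card = t} :=
    Nat.card_le_card_of_injective (fun x => ⟨x.1, x.2.card_eq⟩)
      (fun x y h => Subtype.ext (by simpa using congrArg Subtype.val h))
  simpa [Nat.card_eq_fintype_card, Fintype.card_finset_len] using h

lemma natdiv_mem_Icc {a c : ℕ} (h : a ≤ c) : (a : ℝ) / (c : ℝ) ∈ Set.Icc (0 : ℝ) 1 := by
  rcases Nat.eq_zero_or_pos c with hc | hc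
  · simp [hc]
  · constructor
    · positivity
    · rw [div_le_one (by exact_mod_cast hc)]
      exact_mod_cast h

lemma gval_mem (s t n : ℕ) (G : SimpleGraph (Fin n)) :
    gval s t n G ∈ Set.Icc (0 : ℝ) 1 ×ˢ Set.Icc (0 : ℝ) 1 :=
  ⟨natdiv_mem_Icc (kcount_le s n Gᶜ), natdiv_mem_Icc (kcount_le t n G)⟩

/-- The set of limits of sequences with `a n ∈ S n` is closed in a metric space. -/
lemma limitSet_isClosed {X : Type*} [PseudoMetricSpace X] (S : ℕ → Set X) :
    IsClosed {p : X | ∃ a : ℕ → X, (∀ n, a n ∈ S n) ∧ Tendsto a atTop (𝓝 p)} := by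
  apply IsSeqClosed.isClosed
  intro q p hq hqp
  choose a ha hta using hq
  have hN : ∀ k : ℕ, ∃ N, ∀ n ≥ N, dist (a k n) (q k) < 1 / ((k : ℝ) + 1) := by
    intro k
    exact Metric.tendsto_atTop.mp (hta k) (1 / ((k : ℝ) + 1)) (by positivity)
  choose N hNspec using hN
  set M : ℕ → ℕ := fun k => Nat.rec (N 0) (fun k ih => max (N (k + 1)) (ih + 1)) k with hM
  have hMN : ∀ k, N k ≤ M k := by
    intro k
    cases k with
    | zero => exact le_refl _
    | succ m => exact le_max_left _ _
  have hMmono : StrictMono M :=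
    strictMono_nat_of_lt_succ fun k =>
      lt_of_lt_of_le (Nat.lt_succ_self _) (le_max_right _ _)
  set κ : ℕ → ℕ := fun n => Nat.findGreatest (fun j => M j ≤ n) n with hκ
  have hκ1 : ∀ k n, M k ≤ n → k ≤ κ n := fun k n h =>
    Nat.le_findGreatest (le_trans hMmono.le_apply h) h
  have hκ2 : ∀ n, M 0 ≤ n → M (κ n) ≤ n := by
    intro n h
    exact Nat.findGreatest_spec (P := fun j => M j ≤ n) (m := 0) (n := n)
      (Nat.zero_le n) h
  set b : ℕ → X := fun n => a (κ n) n with hb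
  have hκtop : Tendsto κ atTop atTop :=
    tendsto_atTop.mpr fun k => eventually_atTop.mpr ⟨M k, fun n hn => hκ1 k n hn⟩
  have h1 : Tendsto (fun n => 1 / ((κ n : ℝ) + 1)) atTop (𝓝 0) :=
    tendsto_one_div_add_atTop_nhds_zero_nat.comp hκtop
  have h2 : Tendsto (fun n => dist (q (κ n)) p) atTop (𝓝 0) :=
    (tendsto_iff_dist_tendsto_zero.mp hqp).comp hκtop
  have hsum : Tendsto (fun n => 1 / ((κ n : ℝ) + 1) + dist (q (κ n)) p) atTop (𝓝 0) := by
    simpa using h1.add h2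
  have hub : ∀ᶠ n in atTop, dist (b n) p ≤ 1 / ((κ n : ℝ) + 1) + dist (q (κ n)) p := by
    filter_upwards [eventually_ge_atTop (M 0)] with n hn
    have hd : dist (a (κ n) n) (q (κ n)) < 1 / ((κ n : ℝ) + 1) :=
      hNspec (κ n) n (le_trans (hMN (κ n)) (hκ2 n hn))
    calc dist (b n) p ≤ dist (a (κ n) n) (q (κ n)) + dist (q (κ n)) p := dist_triangle _ _ _
      _ ≤ 1 / ((κ n : ℝ) + 1) + dist (q (κ n)) p := by linarith
  have hbp : Tendsto b atTop (𝓝 p) := by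
    rw [tendsto_iff_dist_tendsto_zero]
    exact tendsto_of_tendsto_of_tendsto_of_le_of_le' tendsto_const_nhds hsum
      (Eventually.of_forall fun n => dist_nonneg) hub
  exact ⟨b, fun n => ha (κ n) n, hbp⟩

lemma omegaST_eq (s t : ℕ) :
    OmegaST s t = {p : ℝ × ℝ | ∃ a : ℕ → ℝ × ℝ,
      (∀ n, a n ∈ Set.range (gval s t n)) ∧ Tendsto a atTop (𝓝 p)} := by
  ext p
  constructor
  · rintro ⟨G, h1, h2⟩
    refine ⟨fun n => gval s t n (G n), fun n => ⟨G n, rfl⟩, ?_⟩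
    have := h1.prodMk_nhds h2
    exact this
  · rintro ⟨a, hmem, hlim⟩
    choose G hG using hmem
    refine ⟨G, ?_, ?_⟩
    · have : Tendsto (fun n => (a n).1) atTop (𝓝 p.1) :=
        (continuous_fst.tendsto p).comp hlim
      convert this using 2 with n
      rw [← hG n]
      rfl
    · have : Tendsto (fun n => (a n).2) atTop (𝓝 p.2) :=
        (continuous_snd.tendsto p).comp hlim
      convert this using 2 with n
      rw [← hG n]
      rfl

/-- For all `s, t ≥ 2`, the region `Ω_{s,t}` is a compact subset of `[0,1]²`. -/
theorem OmegaST_compact (s t : ℕ) (hs : 2 ≤ s) (ht : 2 ≤ t) :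
    IsCompact (OmegaST s t) ∧
    OmegaST s t ⊆ Set.Icc (0 : ℝ) 1 ×ˢ Set.Icc (0 : ℝ) 1 := by
  have hclosed : IsClosed (OmegaST s t) := by
    rw [omegaST_eq]
    exact limitSet_isClosed _
  have hsub : OmegaST s t ⊆ Set.Icc (0 : ℝ) 1 ×ˢ Set.Icc (0 : ℝ) 1 := by
    intro p hp
    rw [omegaST_eq] at hp
    obtain ⟨a, hmem, hlim⟩ := hp
    refine (isClosed_Icc.prod isClosed_Icc).mem_of_tendsto hlim
      (Eventually.of_forall fun n => ?_)
    obtain ⟨G, hG⟩ := hmem n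
    exact hG ▸ gval_mem s t n G
  exact ⟨IsCompact.of_isClosed_subset ((isCompact_Icc.prod isCompact_Icc)) hclosed hsub, hsub⟩
end

section
/- For all integers s, t ≥ 2, the set Ω_{s,t} is vertically convex: if (x,y_1) ∈ Ω_{s,t} and (x,y_2) ∈ Ω_{s,t} and y_1 ≤ y ≤ y_2, then (x,y) ∈ Ω_{s,t}. In particular, Ω_{s,t} is the simply connected region between its lower and upper bounding curves. -/
open Filter Topology

section Aux
open SimpleGraph Finset
open scoped Classical

lemma kcount_eq {n : ℕ} (t : ℕ) (G : SimpleGraph (Fin n)) :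
    kcount t G = (Finset.univ.filter (fun s : Finset (Fin n) => G.IsNClique t s)).card := by
  rw [kcount, Nat.card_eq_fintype_card, Fintype.card_subtype]

lemma kcount_mono {n : ℕ} (t : ℕ) {G G' : SimpleGraph (Fin n)} (h : G ≤ G') :
    kcount t G ≤ kcount t G' := by
  classical
  rw [kcount_eq, kcount_eq]
  exact Finset.card_le_card (fun S hS => by
    simp only [Finset.mem_filter] at *
    exact ⟨hS.1, hS.2.mono h⟩)

lemma kcount_lipschitz {n : ℕ} (t : ℕ) {G G' : SimpleGraph (Fin n)} (e : Sym2 (Fin n))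
    (h : G ≤ G') (he : G'.edgeSet ⊆ G.edgeSet ∪ {e}) :
    kcount t G' ≤ kcount t G + n.choose (t - 2) := by
  classical
  induction e using Sym2.ind with
  | _ u v =>
  rw [kcount_eq, kcount_eq]
  have hsub : Finset.univ.filter (fun s : Finset (Fin n) => G'.IsNClique t s) ⊆
      Finset.univ.filter (fun s : Finset (Fin n) => G.IsNClique t s) ∪
      Finset.univ.filter (fun s : Finset (Fin n) => G'.IsNClique t s ∧ ¬ G.IsNClique t s) := by
    intro S hS
    simp only [Finset.mem_filter, Finset.mem_union] at *
    by_cases hG : G.IsNClique t S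
    · exact Or.inl ⟨Finset.mem_univ _, hG⟩
    · exact Or.inr ⟨Finset.mem_univ _, hS.2, hG⟩
  refine le_trans (Finset.card_le_card hsub) (le_trans (Finset.card_union_le _ _) ?_)
  refine Nat.add_le_add_left ?_ _
  -- every bad clique contains u and v, u ≠ v
  have hbad : ∀ S : Finset (Fin n), G'.IsNClique t S → ¬ G.IsNClique t S →
      u ∈ S ∧ v ∈ S ∧ u ≠ v := by
    intro S h1 h2
    have : ¬ G.IsClique (S : Set (Fin n)) := fun hc => h2 ⟨hc, h1.2⟩
    rw [SimpleGraph.isClique_iff] at this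
    rw [Set.Pairwise] at this
    push_neg at this
    obtain ⟨a, ha, b, hb, hab, hnadj⟩ := this
    have hadj : G'.Adj a b := h1.1 ha hb hab
    have : s(a, b) ∈ G.edgeSet ∪ {s(u,v)} := he ((SimpleGraph.mem_edgeSet _).mpr hadj)
    rcases this with h' | h'
    · exact absurd h' hnadj
    · simp only [Set.mem_singleton_iff, Sym2.eq_iff] at h'
      rcases h' with ⟨rfl, rfl⟩ | ⟨rfl, rfl⟩
      · exact ⟨ha, hb, hab⟩
      · exact ⟨hb, ha, hab.symm⟩
  calc (Finset.univ.filter (fun s : Finset (Fin n) => G'.IsNClique t s ∧ ¬ G.IsNClique t s)).card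
      ≤ (Finset.univ.powersetCard (t - 2)).card := by
        refine Finset.card_le_card_of_injOn (fun S => S \ {u, v}) ?_ ?_
        · intro S hS
          simp only [Finset.mem_coe, Finset.mem_filter] at hS ⊢
          obtain ⟨hu, hv, huv⟩ := hbad S hS.2.1 hS.2.2
          rw [Finset.mem_powersetCard]
          refine ⟨Finset.subset_univ _, ?_⟩
          rw [Finset.card_sdiff_of_subset (by intro a ha; simp at ha; rcases ha with rfl | rfl <;> assumption)]
          rw [hS.2.1.2]
          rw [Finset.card_pair huv]
        · intro S1 hS1 S2 hS2 hEq
          simp only [Finset.coe_filter, Set.mem_setOf_eq] at hS1 hS2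
          obtain ⟨hu1, hv1, _⟩ := hbad S1 hS1.2.1 hS1.2.2
          obtain ⟨hu2, hv2, _⟩ := hbad S2 hS2.2.1 hS2.2.2
          ext a
          by_cases hau : a = u
          · subst hau; simp [hu1, hu2]
          · by_cases hav : a = v
            · subst hav; simp [hv1, hv2]
            · have h1 : a ∈ S1 ↔ a ∈ S1 \ {u, v} := by simp [hau, hav]
              have h2 : a ∈ S2 ↔ a ∈ S2 \ {u, v} := by simp [hau, hav]
              rw [h1, h2]; simp only at hEq; rw [hEq]
    _ = n.choose (t - 2) := by rw [Finset.card_powersetCard]; simp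

lemma compl_edgeSet_subset {n : ℕ} {G G' : SimpleGraph (Fin n)} (e : Sym2 (Fin n))
    (he : G'.edgeSet ⊆ G.edgeSet ∪ {e}) :
    Gᶜ.edgeSet ⊆ G'ᶜ.edgeSet ∪ {e} := by
  intro x hx
  induction x using Sym2.ind with
  | _ a b =>
  rw [SimpleGraph.mem_edgeSet, SimpleGraph.compl_adj] at hx
  by_cases hadj : G'.Adj a b
  · rcases he ((SimpleGraph.mem_edgeSet _).mpr hadj) with h' | h'
    · exact absurd ((SimpleGraph.mem_edgeSet _).mp h') hx.2
    · exact Or.inr h'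
  · exact Or.inl (by rw [SimpleGraph.mem_edgeSet, SimpleGraph.compl_adj]; exact ⟨hx.1, hadj⟩)

lemma chain_le {u : ℕ → ℝ} : ∀ {p : ℕ}, (∀ i < p, u i ≤ u (i+1)) → ∀ i ≤ p, u i ≤ u p := by
  intro p
  induction p with
  | zero => intro _ i hi; interval_cases i; exact le_refl _
  | succ p ih =>
    intro h i hi
    rcases Nat.eq_or_lt_of_le hi with rfl | hlt
    · exact le_refl _
    · exact le_trans (ih (fun j hj => h j (Nat.lt_succ_of_lt hj)) i (Nat.lt_succ_iff.mp hlt))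
        (h p (Nat.lt_succ_self p))

lemma ivt_aux (N : ℕ) (h : ℕ → ℝ) (δ : ℝ) (hδ : 0 ≤ δ)
    (hstep : ∀ k < N, |h (k+1) - h k| ≤ δ) (y : ℝ)
    (hy0 : h 0 ≤ y) (hyN : y ≤ h N) : ∃ k ≤ N, |h k - y| ≤ δ := by
  have hex : ∃ k, y ≤ h k := ⟨N, hyN⟩
  have hky : y ≤ h (Nat.find hex) := Nat.find_spec hex
  have hkN : Nat.find hex ≤ N := Nat.find_le hyN
  refine ⟨Nat.find hex, hkN, ?_⟩
  rcases Nat.eq_zero_or_eq_succ_pred (Nat.find hex) with h0 | hsucc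
  · rw [h0] at hky ⊢
    have : h 0 = y := le_antisymm hy0 hky
    rw [this, sub_self, abs_zero]; exact hδ
  · set k' := Nat.find hex - 1 with hk'
    have hlt : k' < Nat.find hex := by omega
    have hprev : ¬ y ≤ h k' := Nat.find_min hex hlt
    push_neg at hprev
    have hstep' : |h (k' + 1) - h k'| ≤ δ := hstep k' (by omega)
    have : h (k' + 1) - h k' ≤ δ := le_trans (le_abs_self _) hstep'
    have hkk : k' + 1 = Nat.find hex := by omega
    rw [hkk] at this
    rw [abs_of_nonneg (by linarith)]
    linarith

lemma ivt (N : ℕ) (h : ℕ → ℝ) (δ : ℝ) (hδ : 0 ≤ δ)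
    (hstep : ∀ k < N, |h (k+1) - h k| ≤ δ) (y : ℝ)
    (h1 : min (h 0) (h N) ≤ y) (h2 : y ≤ max (h 0) (h N)) : ∃ k ≤ N, |h k - y| ≤ δ := by
  rcases le_total (h 0) (h N) with hc | hc
  · rw [min_eq_left hc] at h1; rw [max_eq_right hc] at h2
    exact ivt_aux N h δ hδ hstep y h1 h2
  · rw [min_eq_right hc] at h1; rw [max_eq_left hc] at h2
    obtain ⟨k, hk, hb⟩ := ivt_aux N (fun k => -h k) δ hδ
      (fun k hk => by rw [show -h (k+1) - -h k = -(h (k+1) - h k) by ring, abs_neg]; exact hstep k hk) (-y)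
      (by simpa using h2) (by simpa using h1)
    refine ⟨k, hk, ?_⟩
    rw [show -h k - -y = -(h k - y) by ring, abs_neg] at hb
    exact hb

noncomputable def gridPath (p q : ℕ) (f : ℕ → ℕ → ℝ) : ℕ → ℕ × ℕ
  | 0 => (0, 0)
  | (k+1) =>
      let ij := gridPath p q f k
      if ij.1 < p ∧ (f ij.1 ij.2 < f p q ∨ q ≤ ij.2) then (ij.1 + 1, ij.2)
      else if ij.2 < q then (ij.1, ij.2 + 1) else ij

lemma gridPath_state (p q : ℕ) (f : ℕ → ℕ → ℝ) :
    ∀ k ≤ p + q, (gridPath p q f k).1 + (gridPath p q f k).2 = k ∧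
      (gridPath p q f k).1 ≤ p ∧ (gridPath p q f k).2 ≤ q := by
  intro k
  induction k with
  | zero => intro _; simp [gridPath]
  | succ k ih =>
    intro hk
    obtain ⟨hsum, hip, hjq⟩ := ih (by omega)
    set ij := gridPath p q f k with hij
    rw [show gridPath p q f (k+1) =
      (if ij.1 < p ∧ (f ij.1 ij.2 < f p q ∨ q ≤ ij.2) then (ij.1 + 1, ij.2)
       else if ij.2 < q then (ij.1, ij.2 + 1) else ij) from rfl]
    split_ifs with h1 h2
    · simp; omega
    · simp; omega
    · exfalso
      push_neg at h1
      have hjq' : ij.2 = q := by omega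
      have hip' : ij.1 < p := by
        rcases Nat.eq_or_lt_of_le hip with he | hl
        · exfalso; rw [he] at hsum; omega
        · exact hl
      have := (h1 hip').2
      omega

lemma gridPath_end (p q : ℕ) (f : ℕ → ℕ → ℝ) : gridPath p q f (p + q) = (p, q) := by
  obtain ⟨hsum, hip, hjq⟩ := gridPath_state p q f (p + q) le_rfl
  have : (gridPath p q f (p+q)).1 = p ∧ (gridPath p q f (p+q)).2 = q := by omega
  exact Prod.ext this.1 this.2

lemma grid_main (p q : ℕ) (f g : ℕ → ℕ → ℝ) (δ δ' : ℝ) (hδ : 0 ≤ δ) (hδ' : 0 ≤ δ')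
    (hfi : ∀ i < p, ∀ j ≤ q, f i j ≤ f (i+1) j ∧ f (i+1) j ≤ f i j + δ)
    (hfj : ∀ i ≤ p, ∀ j < q, f i (j+1) ≤ f i j ∧ f i j ≤ f i (j+1) + δ)
    (hgi : ∀ i < p, ∀ j ≤ q, g (i+1) j ≤ g i j ∧ g i j ≤ g (i+1) j + δ')
    (hgj : ∀ i ≤ p, ∀ j < q, g i j ≤ g i (j+1) ∧ g i (j+1) ≤ g i j + δ')
    (y : ℝ) (hy1 : min (g 0 0) (g p q) ≤ y) (hy2 : y ≤ max (g 0 0) (g p q)) :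
    ∃ i ≤ p, ∃ j ≤ q,
      (min (f 0 0) (f p q) - δ ≤ f i j ∧ f i j ≤ max (f 0 0) (f p q) + δ) ∧
      |g i j - y| ≤ δ' := by
  have monoI : ∀ i ≤ p, f i q ≤ f p q :=
    chain_le (u := fun i => f i q) (fun i hi => (hfi i hi q le_rfl).1)
  have monoJ : ∀ j ≤ q, f p q ≤ f p j := by
    intro j hj
    have := chain_le (u := fun j => -(f p j)) (fun j hj' => neg_le_neg (hfj p le_rfl j hj').1) j hj
    simpa using this
  -- f bound invariant along path
  have finv : ∀ k ≤ p + q,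
      min (f 0 0) (f p q) - δ ≤ f (gridPath p q f k).1 (gridPath p q f k).2 ∧
      f (gridPath p q f k).1 (gridPath p q f k).2 ≤ max (f 0 0) (f p q) + δ := by
    intro k
    induction k with
    | zero =>
      intro _
      simp only [gridPath]
      constructor
      · calc min (f 0 0) (f p q) - δ ≤ min (f 0 0) (f p q) := by linarith
          _ ≤ f 0 0 := min_le_left _ _
      · calc f 0 0 ≤ max (f 0 0) (f p q) := le_max_left _ _
          _ ≤ max (f 0 0) (f p q) + δ := by linarith
    | succ k ih =>
      intro hk
      obtain ⟨hlo, hhi⟩ := ih (by omega)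
      obtain ⟨hsum, hip, hjq⟩ := gridPath_state p q f k (by omega)
      set ij := gridPath p q f k with hij
      rw [show gridPath p q f (k+1) =
        (if ij.1 < p ∧ (f ij.1 ij.2 < f p q ∨ q ≤ ij.2) then (ij.1 + 1, ij.2)
         else if ij.2 < q then (ij.1, ij.2 + 1) else ij) from rfl]
      split_ifs with h1 h2
      · -- delete step
        obtain ⟨hmono, hlip⟩ := hfi ij.1 h1.1 ij.2 hjq
        simp only
        constructor
        · linarith
        · rcases h1.2 with hc | hc
          · have := le_max_right (f 0 0) (f p q); linarith
          · have hjq' : ij.2 = q := le_antisymm hjq hc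
            have : f (ij.1 + 1) ij.2 ≤ f p q := by
              rw [hjq']; exact monoI (ij.1 + 1) h1.1
            have := le_max_right (f 0 0) (f p q); linarith
      · -- add step
        obtain ⟨hmono, hlip⟩ := hfj ij.1 hip ij.2 h2
        simp only
        push_neg at h1
        constructor
        · rcases Nat.eq_or_lt_of_le hip with he | hl
          · have : f p q ≤ f ij.1 (ij.2 + 1) := by
              rw [← he] at monoJ ⊢
              exact monoJ (ij.2 + 1) h2
            have := min_le_right (f 0 0) (f p q); linarith
          · have hge : f p q ≤ f ij.1 ij.2 := (h1 hl).1
            have := min_le_right (f 0 0) (f p q); linarith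
        · linarith
      · exact ⟨hlo, hhi⟩
  -- g steps along path
  have gstep : ∀ k < p + q,
      |g (gridPath p q f (k+1)).1 (gridPath p q f (k+1)).2 -
        g (gridPath p q f k).1 (gridPath p q f k).2| ≤ δ' := by
    intro k hk
    obtain ⟨hsum, hip, hjq⟩ := gridPath_state p q f k (by omega)
    set ij := gridPath p q f k with hij
    rw [show gridPath p q f (k+1) =
      (if ij.1 < p ∧ (f ij.1 ij.2 < f p q ∨ q ≤ ij.2) then (ij.1 + 1, ij.2)
       else if ij.2 < q then (ij.1, ij.2 + 1) else ij) from rfl]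
    split_ifs with h1 h2
    · obtain ⟨ha, hb⟩ := hgi ij.1 h1.1 ij.2 hjq
      simp only
      rw [abs_le]; constructor <;> linarith
    · obtain ⟨ha, hb⟩ := hgj ij.1 hip ij.2 h2
      simp only
      rw [abs_le]; constructor <;> linarith
    · exfalso
      push_neg at h1
      have hjq' : ij.2 = q := by omega
      have hip' : ij.1 < p := by
        rcases Nat.eq_or_lt_of_le hip with he | hl
        · exfalso; rw [he] at hsum; omega
        · exact hl
      have := (h1 hip').2
      omega
  -- apply IVT to g along path
  have hend := gridPath_end p q f
  have h00 : gridPath p q f 0 = (0, 0) := rfl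
  obtain ⟨k, hkN, hkb⟩ := ivt (p + q)
    (fun k => g (gridPath p q f k).1 (gridPath p q f k).2) δ' hδ' gstep y
    (by simp only [h00, hend]; exact hy1) (by simp only [h00, hend]; exact hy2)
  obtain ⟨hsum, hip, hjq⟩ := gridPath_state p q f k hkN
  exact ⟨(gridPath p q f k).1, hip, (gridPath p q f k).2, hjq, finv k hkN, hkb⟩

noncomputable def densI (s : ℕ) {n : ℕ} (G : SimpleGraph (Fin n)) : ℝ :=
  (kcount s Gᶜ : ℝ) / (n.choose s)

noncomputable def densK (t : ℕ) {n : ℕ} (G : SimpleGraph (Fin n)) : ℝ :=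
  (kcount t G : ℝ) / (n.choose t)

lemma nat_div_le_div {a b : ℕ} (c : ℕ) (h : a ≤ b) : (a : ℝ) / c ≤ (b : ℝ) / c :=
  div_le_div_of_nonneg_right (by exact_mod_cast h) (by positivity)

lemma nat_div_lip {a b k c : ℕ} (h : a ≤ b + k) : (a : ℝ) / c ≤ (b : ℝ) / c + (k : ℝ) / c := by
  rw [← add_div]
  exact_mod_cast nat_div_le_div c h

lemma key (s t n : ℕ) (A B : SimpleGraph (Fin n)) (y : ℝ)
    (hy1 : min (densK t A) (densK t B) ≤ y) (hy2 : y ≤ max (densK t A) (densK t B)) :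
    ∃ H : SimpleGraph (Fin n),
      (min (densI s A) (densI s B) - (n.choose (s-2) : ℝ)/(n.choose s) ≤ densI s H ∧
       densI s H ≤ max (densI s A) (densI s B) + (n.choose (s-2) : ℝ)/(n.choose s)) ∧
      |densK t H - y| ≤ (n.choose (t-2) : ℝ)/(n.choose t) := by
  classical
  set DS : Set (Sym2 (Fin n)) := A.edgeSet \ B.edgeSet with hDS
  set AS : Set (Sym2 (Fin n)) := B.edgeSet \ A.edgeSet with hAS
  set dl : List (Sym2 (Fin n)) := (Set.Finite.toFinset (Set.toFinite DS)).toList with hdl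
  set al : List (Sym2 (Fin n)) := (Set.Finite.toFinset (Set.toFinite AS)).toList with hal
  have hdlmem : ∀ e, e ∈ dl ↔ e ∈ DS := by
    intro e; rw [hdl, Finset.mem_toList, Set.Finite.mem_toFinset]
  have halmem : ∀ e, e ∈ al ↔ e ∈ AS := by
    intro e; rw [hal, Finset.mem_toList, Set.Finite.mem_toFinset]
  set p := dl.length with hp
  set q := al.length with hq
  set H : ℕ → ℕ → SimpleGraph (Fin n) := fun i j =>
    SimpleGraph.fromEdgeSet ((A.edgeSet \ {e | e ∈ dl.take i}) ∪ {e | e ∈ al.take j}) with hH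
  have htake : ∀ (l : List (Sym2 (Fin n))) (i : ℕ) (hi : i < l.length),
      l.take (i+1) = l.take i ++ [l.get ⟨i, hi⟩] := by
    intro l i hi
    rw [List.take_succ, List.getElem?_eq_getElem hi]
    rfl
  -- monotonicity of the grid graphs
  have hsubI : ∀ i j, H (i+1) j ≤ H i j := by
    intro i j
    apply SimpleGraph.fromEdgeSet_mono
    apply Set.union_subset_union_left
    apply Set.diff_subset_diff_right
    intro x hx
    simp only [Set.mem_setOf_eq] at *
    rcases Nat.lt_or_ge i dl.length with hi | hi
    · rw [htake dl i hi]; exact List.mem_append_left _ hx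
    · rw [List.take_of_length_le (by omega)]
      rwa [List.take_of_length_le hi] at hx
  have hsubJ : ∀ i j, H i j ≤ H i (j+1) := by
    intro i j
    apply SimpleGraph.fromEdgeSet_mono
    apply Set.union_subset_union_right
    intro x hx
    simp only [Set.mem_setOf_eq] at *
    rcases Nat.lt_or_ge j al.length with hj | hj
    · rw [htake al j hj]; exact List.mem_append_left _ hx
    · rw [List.take_of_length_le (by omega)]
      rwa [List.take_of_length_le hj] at hx
  -- one-step edge set control
  have hedgeI : ∀ i j (hi : i < p),
      (H i j).edgeSet ⊆ (H (i+1) j).edgeSet ∪ {dl.get ⟨i, hi⟩} := by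
    intro i j hi
    show (SimpleGraph.fromEdgeSet ((A.edgeSet \ {e | e ∈ dl.take i}) ∪ {e | e ∈ al.take j})).edgeSet
      ⊆ (SimpleGraph.fromEdgeSet ((A.edgeSet \ {e | e ∈ dl.take (i+1)}) ∪ {e | e ∈ al.take j})).edgeSet
        ∪ {dl.get ⟨i, hi⟩}
    simp only [SimpleGraph.edgeSet_fromEdgeSet]
    intro x hx
    obtain ⟨hx1, hx2⟩ := hx
    rcases hx1 with ⟨hxA, hxT⟩ | hxU
    · by_cases hxe : x = dl.get ⟨i, hi⟩
      · exact Or.inr hxe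
      · refine Or.inl ⟨Or.inl ⟨hxA, ?_⟩, hx2⟩
        simp only [Set.mem_setOf_eq] at hxT ⊢
        rw [htake dl i hi]
        intro hmem
        rcases List.mem_append.mp hmem with h' | h'
        · exact hxT h'
        · exact hxe (List.mem_singleton.mp h')
    · exact Or.inl ⟨Or.inr hxU, hx2⟩
  have hedgeJ : ∀ i j (hj : j < q),
      (H i (j+1)).edgeSet ⊆ (H i j).edgeSet ∪ {al.get ⟨j, hj⟩} := by
    intro i j hj
    show (SimpleGraph.fromEdgeSet ((A.edgeSet \ {e | e ∈ dl.take i}) ∪ {e | e ∈ al.take (j+1)})).edgeSet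
      ⊆ (SimpleGraph.fromEdgeSet ((A.edgeSet \ {e | e ∈ dl.take i}) ∪ {e | e ∈ al.take j})).edgeSet
        ∪ {al.get ⟨j, hj⟩}
    simp only [SimpleGraph.edgeSet_fromEdgeSet]
    intro x hx
    obtain ⟨hx1, hx2⟩ := hx
    rcases hx1 with hxA | hxU
    · exact Or.inl ⟨Or.inl hxA, hx2⟩
    · simp only [Set.mem_setOf_eq] at hxU
      rw [htake al j hj] at hxU
      rcases List.mem_append.mp hxU with h' | h'
      · exact Or.inl ⟨Or.inr h', hx2⟩
      · exact Or.inr (List.mem_singleton.mp h')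
  -- endpoints
  have hH00 : H 0 0 = A := by
    show SimpleGraph.fromEdgeSet ((A.edgeSet \ {e | e ∈ dl.take 0}) ∪ {e | e ∈ al.take 0}) = A
    simp only [List.take_zero]
    have : ({e | e ∈ ([] : List (Sym2 (Fin n)))} : Set (Sym2 (Fin n))) = ∅ := by
      ext x; simp
    rw [this]
    rw [Set.diff_empty, Set.union_empty, SimpleGraph.fromEdgeSet_edgeSet]
  have hHpq : H p q = B := by
    show SimpleGraph.fromEdgeSet ((A.edgeSet \ {e | e ∈ dl.take p}) ∪ {e | e ∈ al.take q}) = B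
    have h1 : ({e | e ∈ dl.take p} : Set (Sym2 (Fin n))) = DS := by
      ext x
      rw [hp, List.take_length]
      exact (Set.mem_setOf_eq ▸ hdlmem x)
    have h2 : ({e | e ∈ al.take q} : Set (Sym2 (Fin n))) = AS := by
      ext x
      rw [hq, List.take_length]
      exact (Set.mem_setOf_eq ▸ halmem x)
    rw [h1, h2, hDS, hAS]
    have : A.edgeSet \ (A.edgeSet \ B.edgeSet) ∪ B.edgeSet \ A.edgeSet = B.edgeSet := by
      ext x
      simp only [Set.mem_union, Set.mem_diff]
      tauto
    rw [this, SimpleGraph.fromEdgeSet_edgeSet]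
  -- instantiate the grid lemma
  have hδ : (0:ℝ) ≤ (n.choose (s-2) : ℝ)/(n.choose s) := by positivity
  have hδ' : (0:ℝ) ≤ (n.choose (t-2) : ℝ)/(n.choose t) := by positivity
  obtain ⟨i, hip, j, hjq, ⟨hf1, hf2⟩, hg⟩ := grid_main p q
    (fun i j => densI s (H i j)) (fun i j => densK t (H i j))
    ((n.choose (s-2) : ℝ)/(n.choose s)) ((n.choose (t-2) : ℝ)/(n.choose t)) hδ hδ'
    (fun i hi j _ => by
      constructor
      · exact nat_div_le_div _ (kcount_mono s (compl_le_compl (hsubI i j)))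
      · exact nat_div_lip (kcount_lipschitz s _ (compl_le_compl (hsubI i j))
          (compl_edgeSet_subset _ (hedgeI i j hi))))
    (fun i _ j hj => by
      constructor
      · exact nat_div_le_div _ (kcount_mono s (compl_le_compl (hsubJ i j)))
      · exact nat_div_lip (kcount_lipschitz s _ (compl_le_compl (hsubJ i j))
          (compl_edgeSet_subset _ (hedgeJ i j hj))))
    (fun i hi j _ => by
      constructor
      · exact nat_div_le_div _ (kcount_mono t (hsubI i j))
      · exact nat_div_lip (kcount_lipschitz t _ (hsubI i j) (hedgeI i j hi)))
    (fun i _ j hj => by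
      constructor
      · exact nat_div_le_div _ (kcount_mono t (hsubJ i j))
      · exact nat_div_lip (kcount_lipschitz t _ (hsubJ i j) (hedgeJ i j hj)))
    y (by simp only [hH00, hHpq]; exact hy1) (by simp only [hH00, hHpq]; exact hy2)
  simp only [hH00, hHpq] at hf1 hf2 hg
  exact ⟨H i j, ⟨hf1, hf2⟩, hg⟩

lemma choose_ratio_tendsto (m : ℕ) :
    Filter.Tendsto (fun n : ℕ => (n.choose m : ℝ) / (n.choose (m+2))) Filter.atTop (nhds 0) := by
  have hub : ∀ n : ℕ, m + 2 ≤ n →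
      (n.choose m : ℝ) / (n.choose (m+2)) ≤ (((m:ℝ)+1)*((m:ℝ)+2)) / ((n:ℝ) - m - 1) := by
    intro n hn
    have h1 := Nat.choose_succ_right_eq n m
    have h2 := Nat.choose_succ_right_eq n (m+1)
    have hsub : n - (m+1) = n - m - 1 := by omega
    rw [hsub] at h2
    have hnm : 1 ≤ n - m := by omega
    have hnat : n.choose m * (n - m - 1) ≤ n.choose (m+2) * ((m+1)*(m+2)) := by
      calc n.choose m * (n - m - 1) ≤ n.choose m * (n - m) * (n - m - 1) := by
            have : n.choose m ≤ n.choose m * (n - m) := Nat.le_mul_of_pos_right _ (by omega)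
            exact Nat.mul_le_mul_right _ this
        _ = n.choose (m+1) * (m+1) * (n - m - 1) := by rw [h1]
        _ = n.choose (m+1) * (n - m - 1) * (m+1) := by ring
        _ = n.choose (m+2) * (m+2) * (m+1) := by rw [← h2]
        _ = n.choose (m+2) * ((m+1)*(m+2)) := by ring
    have hb : (0:ℝ) < (n.choose (m+2) : ℝ) := by
      exact_mod_cast Nat.choose_pos hn
    have hd : (0:ℝ) < (n:ℝ) - m - 1 := by
      have : (m+2 : ℝ) ≤ (n:ℝ) := by exact_mod_cast hn
      linarith
    rw [div_le_div_iff₀ hb hd]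
    have hcast : ((n - m - 1 : ℕ) : ℝ) = (n:ℝ) - m - 1 := by
      have h1' : m + 1 ≤ n := by omega
      rw [show n - m - 1 = n - (m+1) by omega, Nat.cast_sub h1']
      push_cast; ring
    calc (n.choose m : ℝ) * ((n:ℝ) - m - 1) = ((n.choose m * (n - m - 1) : ℕ) : ℝ) := by
          rw [Nat.cast_mul, hcast]
      _ ≤ ((n.choose (m+2) * ((m+1)*(m+2)) : ℕ) : ℝ) := by exact_mod_cast hnat
      _ = ((m:ℝ)+1)*((m:ℝ)+2) * (n.choose (m+2) : ℝ) := by push_cast; ring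
  have hden : Filter.Tendsto (fun n : ℕ => (n:ℝ) - m - 1) Filter.atTop Filter.atTop := by
    have : Filter.Tendsto (fun n : ℕ => (n:ℝ) + (-(m:ℝ)-1)) Filter.atTop Filter.atTop :=
      Filter.tendsto_atTop_add_const_right _ _ tendsto_natCast_atTop_atTop
    convert this using 2 with n
    ring
  have hbound : Filter.Tendsto (fun n : ℕ => (((m:ℝ)+1)*((m:ℝ)+2)) / ((n:ℝ) - m - 1))
      Filter.atTop (nhds 0) := Filter.Tendsto.div_atTop tendsto_const_nhds hden
  refine tendsto_of_tendsto_of_tendsto_of_le_of_le' tendsto_const_nhds hbound ?_ ?_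
  · exact Filter.Eventually.of_forall (fun n => by positivity)
  · exact Filter.eventually_atTop.mpr ⟨m + 2, hub⟩

end Aux

/-- `Ω_{s,t}` is vertically convex: together with the compactness of `Ω_{s,t}` this shows
it is the simply connected region between its lower and upper bounding curves. -/
theorem OmegaST_vertically_convex (s t : ℕ) (hs : 2 ≤ s) (ht : 2 ≤ t)
    (x y₁ y₂ y : ℝ) (h₁ : (x, y₁) ∈ OmegaST s t) (h₂ : (x, y₂) ∈ OmegaST s t)
    (hy₁ : y₁ ≤ y) (hy₂ : y ≤ y₂) : (x, y) ∈ OmegaST s t := by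
  obtain ⟨G1, hG1x, hG1y⟩ := h₁
  obtain ⟨G2, hG2x, hG2y⟩ := h₂
  simp only at hG1x hG1y hG2x hG2y
  -- rephrase in terms of densI/densK
  have hG1x' : Filter.Tendsto (fun n : ℕ => densI s (G1 n)) Filter.atTop (nhds x) := hG1x
  have hG2x' : Filter.Tendsto (fun n : ℕ => densI s (G2 n)) Filter.atTop (nhds x) := hG2x
  have hG1y' : Filter.Tendsto (fun n : ℕ => densK t (G1 n)) Filter.atTop (nhds y₁) := hG1y
  have hG2y' : Filter.Tendsto (fun n : ℕ => densK t (G2 n)) Filter.atTop (nhds y₂) := hG2y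
  -- clamped target
  set yc : ℕ → ℝ := fun n =>
    min (max y (min (densK t (G1 n)) (densK t (G2 n)))) (max (densK t (G1 n)) (densK t (G2 n)))
    with hyc
  have hyc1 : ∀ n, min (densK t (G1 n)) (densK t (G2 n)) ≤ yc n := by
    intro n
    exact le_min (le_max_right _ _) min_le_max
  have hyc2 : ∀ n, yc n ≤ max (densK t (G1 n)) (densK t (G2 n)) := fun n => min_le_right _ _
  -- choose the interpolating graphs
  choose Hn hn using fun n => key s t n (G1 n) (G2 n) (yc n) (hyc1 n) (hyc2 n)
  refine ⟨Hn, ?_, ?_⟩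
  · -- first coordinate
    show Filter.Tendsto (fun n : ℕ => densI s (Hn n)) Filter.atTop (nhds x)
    have hδ : Filter.Tendsto (fun n : ℕ => (n.choose (s-2) : ℝ)/(n.choose s))
        Filter.atTop (nhds 0) := by
      have := choose_ratio_tendsto (s - 2)
      rwa [Nat.sub_add_cancel hs] at this
    have hmin : Filter.Tendsto (fun n : ℕ => min (densI s (G1 n)) (densI s (G2 n)))
        Filter.atTop (nhds x) := by
      have := Filter.Tendsto.min hG1x' hG2x'
      rwa [min_self] at this
    have hmax : Filter.Tendsto (fun n : ℕ => max (densI s (G1 n)) (densI s (G2 n)))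
        Filter.atTop (nhds x) := by
      have := Filter.Tendsto.max hG1x' hG2x'
      rwa [max_self] at this
    have hlo : Filter.Tendsto
        (fun n : ℕ => min (densI s (G1 n)) (densI s (G2 n)) - (n.choose (s-2) : ℝ)/(n.choose s))
        Filter.atTop (nhds x) := by
      have := Filter.Tendsto.sub hmin hδ
      simpa using this
    have hhi : Filter.Tendsto
        (fun n : ℕ => max (densI s (G1 n)) (densI s (G2 n)) + (n.choose (s-2) : ℝ)/(n.choose s))
        Filter.atTop (nhds x) := by
      have := Filter.Tendsto.add hmax hδ
      simpa using this
    exact tendsto_of_tendsto_of_tendsto_of_le_of_le hlo hhi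
      (fun n => (hn n).1.1) (fun n => (hn n).1.2)
  · -- second coordinate
    show Filter.Tendsto (fun n : ℕ => densK t (Hn n)) Filter.atTop (nhds y)
    have hδ' : Filter.Tendsto (fun n : ℕ => (n.choose (t-2) : ℝ)/(n.choose t))
        Filter.atTop (nhds 0) := by
      have := choose_ratio_tendsto (t - 2)
      rwa [Nat.sub_add_cancel ht] at this
    have hyct : Filter.Tendsto yc Filter.atTop (nhds y) := by
      rw [hyc]
      have hmin : Filter.Tendsto (fun n : ℕ => min (densK t (G1 n)) (densK t (G2 n)))
          Filter.atTop (nhds (min y₁ y₂)) := Filter.Tendsto.min hG1y' hG2y'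
      have hmax : Filter.Tendsto (fun n : ℕ => max (densK t (G1 n)) (densK t (G2 n)))
          Filter.atTop (nhds (max y₁ y₂)) := Filter.Tendsto.max hG1y' hG2y'
      have := Filter.Tendsto.min (Filter.Tendsto.max (tendsto_const_nhds : Filter.Tendsto (fun _ : ℕ => y) Filter.atTop (nhds y)) hmin) hmax
      have heq : min (max y (min y₁ y₂)) (max y₁ y₂) = y := by
        rw [min_eq_left (le_trans hy₁ hy₂), max_eq_left hy₁,
          max_eq_right (le_trans hy₁ hy₂), min_eq_left hy₂]
      rwa [heq] at this
    have hlo : Filter.Tendsto (fun n : ℕ => yc n - (n.choose (t-2) : ℝ)/(n.choose t))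
        Filter.atTop (nhds y) := by
      have := Filter.Tendsto.sub hyct hδ'
      simpa using this
    have hhi : Filter.Tendsto (fun n : ℕ => yc n + (n.choose (t-2) : ℝ)/(n.choose t))
        Filter.atTop (nhds y) := by
      have := Filter.Tendsto.add hyct hδ'
      simpa using this
    refine tendsto_of_tendsto_of_tendsto_of_le_of_le hlo hhi ?_ ?_
    · intro n
      have := (hn n).2
      rw [abs_le] at this
      linarith [this.1]
    · intro n
      have := (hn n).2
      rw [abs_le] at this
      linarith [this.2]
end

section
/- Given integers s, t_0 ≥ 2 with g_{s,t_0} > 0, for every integer t ≥ t_0 one has g_{s,t} ≤ ( t − t_0 + g_{s,t_0}^{1/(1−s)} )^{1−s}. In particular, if g_{s,t_0} < (t_0 − 1)^{1−s}, then g_{s,t} < (t − 1)^{1−s} for all t ≥ t_0. -/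
open Filter Topology

/-- The `n`-th term of the sequence defining `g_{s,t}`: the minimum density of
independent `s`-sets among `K_t`-free graphs on `n` vertices. -/
noncomputable def gSeq (s t n : ℕ) : ℝ :=
  sInf {x : ℝ | ∃ G : SimpleGraph (Fin n), G.CliqueFree t ∧ x = (kcount s Gᶜ : ℝ)} /
    (n.choose s : ℝ)

/-- `g_{s,t}` is the limit of `gSeq s t`; the limit exists since the sequence is
nondecreasing and bounded, hence it equals the `limsup`. -/
noncomputable def gConst (s t : ℕ) : ℝ :=
  Filter.limsup (fun n => gSeq s t n) Filter.atTop

lemma kcount_eq_card {V : Type*} [Fintype V] [DecidableEq V] (t : ℕ) (G : SimpleGraph V)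
    [DecidablePred fun f : Finset V => G.IsNClique t f] :
    kcount t G = (Finset.univ.filter (fun f : Finset V => G.IsNClique t f)).card := by
  rw [kcount, Nat.card_eq_fintype_card, Fintype.card_subtype]

lemma kcount_top {n t : ℕ} : kcount t (⊤ : SimpleGraph (Fin n)) = n.choose t := by
  classical
  rw [kcount_eq_card]
  have h1 : (Finset.filter (fun f => (⊤ : SimpleGraph (Fin n)).IsNClique t f) Finset.univ)
      = Finset.powersetCard t (Finset.univ : Finset (Fin n)) := by
    ext f
    simp only [Finset.mem_filter, Finset.mem_univ, true_and,
      Finset.mem_powersetCard_univ, SimpleGraph.isNClique_iff]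
    exact ⟨fun h => h.2, fun h => ⟨fun a _ b _ hab => hab, h⟩⟩
  have h2 := Finset.card_powersetCard t (Finset.univ : Finset (Fin n))
  rw [h1, h2, Finset.card_univ, Fintype.card_fin]


def gSet (s t n : ℕ) : Set ℝ :=
  {x : ℝ | ∃ G : SimpleGraph (Fin n), G.CliqueFree t ∧ x = (kcount s Gᶜ : ℝ)}

lemma gSet_nonempty (s n : ℕ) {t : ℕ} (ht : 2 ≤ t) : (gSet s t n).Nonempty :=
  ⟨_, ⊥, SimpleGraph.cliqueFree_bot ht, rfl⟩

lemma gSet_bddBelow (s t n : ℕ) : BddBelow (gSet s t n) :=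
  ⟨0, fun x ⟨G, _, hx⟩ => hx ▸ Nat.cast_nonneg _⟩

lemma gSeq_nonneg {s t n : ℕ} (ht : 2 ≤ t) : 0 ≤ gSeq s t n := by
  apply div_nonneg _ (Nat.cast_nonneg _)
  exact le_csInf (gSet_nonempty s n ht) fun x ⟨G, _, hx⟩ => hx ▸ Nat.cast_nonneg _

lemma gSeq_le_witness {s t n : ℕ} (G : SimpleGraph (Fin n)) (hG : G.CliqueFree t) :
    gSeq s t n ≤ (kcount s Gᶜ : ℝ) / (n.choose s : ℝ) := by
  rcases eq_or_lt_of_le (Nat.cast_nonneg (α := ℝ) (n.choose s)) with h | h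
  · rw [gSeq, ← h, div_zero, div_zero]
  · rw [gSeq, div_le_div_iff_of_pos_right h]
    exact csInf_le (gSet_bddBelow s t n) ⟨G, hG, rfl⟩

lemma gSeq_le_one {s t n : ℕ} (ht : 2 ≤ t) : gSeq s t n ≤ 1 := by
  have h := gSeq_le_witness (s := s) (⊥ : SimpleGraph (Fin n)) (SimpleGraph.cliqueFree_bot ht)
  have hk : kcount s (⊥ : SimpleGraph (Fin n))ᶜ = n.choose s := by
    rw [compl_bot]
    exact kcount_top
  rw [hk] at h
  refine h.trans ?_
  rcases Nat.eq_zero_or_pos (n.choose s) with h0 | h0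
  · simp [h0]
  · rw [div_self]
    exact_mod_cast h0.ne'

lemma exists_good_graph {s t n : ℕ} (ht : 2 ≤ t) {b : ℝ} (hb : gSeq s t n < b)
    (hc : 0 < n.choose s) :
    ∃ G : SimpleGraph (Fin n), G.CliqueFree t ∧
      (kcount s Gᶜ : ℝ) ≤ b * (n.choose s : ℝ) := by
  have hcr : (0:ℝ) < (n.choose s : ℝ) := by exact_mod_cast hc
  rw [gSeq, div_lt_iff₀ hcr] at hb
  obtain ⟨x, ⟨G, hG, rfl⟩, hx⟩ := exists_lt_of_csInf_lt (gSet_nonempty s n ht) hb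
  exact ⟨G, hG, hx.le⟩

/-- label of a vertex: `0` for the `H`-part, `1 + (v-m) % k` otherwise. -/
def lab (m k : ℕ) (v : ℕ) : ℕ := if v < m then 0 else 1 + (v - m) % k

/-- The construction: complete join of `H` (on the first `m` vertices) with `k`
independent sets. -/
def consGraph (m k n : ℕ) (H : SimpleGraph (Fin m)) : SimpleGraph (Fin n) where
  Adj u v := lab m k u ≠ lab m k v ∨
    ∃ (hu : (u : ℕ) < m) (hv : (v : ℕ) < m), H.Adj ⟨u, hu⟩ ⟨v, hv⟩
  symm := by
    constructor
    rintro u v (h | ⟨hu, hv, h⟩)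
    · exact Or.inl (Ne.symm h)
    · exact Or.inr ⟨hv, hu, h.symm⟩
  loopless := by
    constructor
    rintro u (h | ⟨hu, hv, h⟩)
    · exact h rfl
    · exact H.irrefl h

lemma clique_card_lt {m t₀ : ℕ} (ht₀ : 1 ≤ t₀) {H : SimpleGraph (Fin m)}
    (hH : H.CliqueFree t₀) {T : Finset (Fin m)} (hT : H.IsClique T) : T.card < t₀ := by
  by_contra hc
  push_neg at hc
  obtain ⟨T', hT'sub, hT'card⟩ := Finset.exists_subset_card_eq hc
  exact hH T' ⟨hT.subset hT'sub, hT'card⟩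

lemma consGraph_cliqueFree {m k n t₀ : ℕ} (hmn : m ≤ n) (ht₀ : 1 ≤ t₀) (hk : 1 ≤ k)
    {H : SimpleGraph (Fin m)} (hH : H.CliqueFree t₀) :
    (consGraph m k n H).CliqueFree (k + t₀) := by
  classical
  intro S hS
  set G' := consGraph m k n H with hG'
  -- split S into the H-part and the rest
  set S₀ : Finset (Fin n) := S.filter (fun v => (v : ℕ) < m) with hS₀
  set S₁ : Finset (Fin n) := S.filter (fun v => ¬ (v : ℕ) < m) with hS₁
  have hsplit : S₀.card + S₁.card = S.card := Finset.card_filter_add_card_filter_not _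
  -- S₁ has at most k elements
  have h1 : S₁.card ≤ k := by
    have : S₁.card ≤ (Finset.range k).card := by
      refine Finset.card_le_card_of_injOn (fun v => ((v : ℕ) - m) % k) ?_ ?_
      · intro v hv
        simp [Finset.mem_range, Nat.mod_lt _ hk]
      · intro u hu v hv huv
        simp only [Finset.mem_coe, hS₁, Finset.mem_filter] at hu hv
        by_contra hne
        have hadj := hS.1 hu.1 hv.1 hne
        rcases hadj with h | ⟨hu', _, _⟩
        · apply h
          simp only [lab, if_neg hu.2, if_neg hv.2, huv]
        · exact hu.2 hu'
    simpa using this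
  -- S₀ has at most t₀ - 1 elements
  have h0 : S₀.card + 1 ≤ t₀ := by
    set emb : Fin m → Fin n := Fin.castLE hmn with hemb
    have hembinj : Function.Injective emb := Fin.castLE_injective hmn
    set T : Finset (Fin m) := S₀.preimage emb hembinj.injOn with hT
    have hTcard : T.card = S₀.card := by
      rw [hT, Finset.card_preimage]
      congr 1
      apply Finset.filter_true_of_mem
      intro v hv
      simp only [hS₀, Finset.mem_filter] at hv
      exact ⟨⟨(v : ℕ), hv.2⟩, Fin.ext rfl⟩
    have hTclique : H.IsClique T := by
      intro u hu v hv huv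
      simp only [Finset.mem_coe, hT, Finset.mem_preimage, hS₀, Finset.mem_filter] at hu hv
      have hne : emb u ≠ emb v := fun h => huv (hembinj h)
      have hadj := hS.1 hu.1 hv.1 hne
      rcases hadj with h | ⟨hu', hv', hH'⟩
      · exfalso
        apply h
        simp only [lab, hemb]
        rw [if_pos hu.2, if_pos hv.2]
      · have e1 : (⟨((emb u : Fin n) : ℕ), hu'⟩ : Fin m) = u := Fin.ext rfl
        have e2 : (⟨((emb v : Fin n) : ℕ), hv'⟩ : Fin m) = v := Fin.ext rfl
        rw [e1, e2] at hH'
        exact hH'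
    have := clique_card_lt ht₀ hH hTclique
    omega
  have := hS.2
  omega

lemma consGraph_kcount {s m k n : ℕ} (hmn : m ≤ n) (hk : 1 ≤ k) (H : SimpleGraph (Fin m)) :
    kcount s (consGraph m k n H)ᶜ ≤ kcount s Hᶜ + k * Nat.choose ((n - m) / k + 1) s := by
  classical
  rw [kcount_eq_card, kcount_eq_card]
  set G' := consGraph m k n H with hG'
  set A := Finset.univ.filter (fun S : Finset (Fin n) => G'ᶜ.IsNClique s S) with hA
  -- pairwise structure of cliques in the complement
  have hlab : ∀ S ∈ A, ∀ u ∈ S, ∀ v ∈ S,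
      lab m k u = lab m k v ∧
        ∀ (hu : (u : ℕ) < m) (hv : (v : ℕ) < m), ¬ H.Adj ⟨u, hu⟩ ⟨v, hv⟩ := by
    intro S hS u hu v hv
    have hSc : G'ᶜ.IsNClique s S := (Finset.mem_filter.1 hS).2
    rcases eq_or_ne u v with rfl | hne
    · exact ⟨rfl, fun h1 h2 hadjx => H.irrefl hadjx⟩
    · have hadj := hSc.1 hu hv hne
      rw [SimpleGraph.compl_adj] at hadj
      have hnadj := hadj.2
      rw [hG'] at hnadj
      simp only [consGraph, not_or, not_exists] at hnadj
      exact ⟨not_not.1 hnadj.1, hnadj.2⟩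
  set q : Finset (Fin n) → Prop := fun S => ∀ v ∈ S, (v : ℕ) < m with hq
  have hcard : A.card ≤ (A.filter q).card + (A.filter fun S => ¬ q S).card :=
    (Finset.card_filter_add_card_filter_not (p := q)).ge
  -- part 1 : the label-0 cliques inject into the cliques of Hᶜ
  have h₁ : (A.filter q).card ≤
      (Finset.univ.filter (fun f : Finset (Fin m) => Hᶜ.IsNClique s f)).card := by
    set emb : Fin m → Fin n := Fin.castLE hmn with hemb
    have hembinj : Function.Injective emb := Fin.castLE_injective hmn
    refine Finset.card_le_card_of_injOn (fun S => S.preimage emb hembinj.injOn) ?_ ?_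
    · intro S hS
      have hSA : S ∈ A := (Finset.mem_filter.1 hS).1
      have hSq : q S := (Finset.mem_filter.1 hS).2
      have hScl : G'ᶜ.IsNClique s S := (Finset.mem_filter.1 hSA).2
      rw [Finset.mem_coe, Finset.mem_filter]
      refine ⟨Finset.mem_univ _, ?_, ?_⟩
      · intro w₁ hw₁ w₂ hw₂ hnex
        simp only [Finset.mem_coe, Finset.mem_preimage] at hw₁ hw₂
        rw [SimpleGraph.compl_adj]
        refine ⟨hnex, ?_⟩
        have h := (hlab S hSA _ hw₁ _ hw₂).2 w₁.2 w₂.2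
        intro hadj
        apply h
        have e1 : (⟨((emb w₁ : Fin n) : ℕ), w₁.2⟩ : Fin m) = w₁ := Fin.ext rfl
        have e2 : (⟨((emb w₂ : Fin n) : ℕ), w₂.2⟩ : Fin m) = w₂ := Fin.ext rfl
        rw [e1, e2]
        exact hadj
      · rw [Finset.card_preimage]
        have : S.filter (· ∈ Set.range emb) = S := by
          apply Finset.filter_true_of_mem
          intro v hv
          exact ⟨⟨(v : ℕ), hSq v hv⟩, Fin.ext rfl⟩
        rw [this, hScl.2]
    · intro S hS S' hS' hSS'
      have hqS : q S := (Finset.mem_filter.1 (Finset.mem_coe.1 hS)).2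
      have hqS' : q S' := (Finset.mem_filter.1 (Finset.mem_coe.1 hS')).2
      have hSS'' : S.preimage emb hembinj.injOn = S'.preimage emb hembinj.injOn := hSS'
      ext v
      constructor
      · intro hv
        have hvm : (v : ℕ) < m := hqS v hv
        have he : emb ⟨(v : ℕ), hvm⟩ = v := Fin.ext rfl
        have h1 : (⟨(v : ℕ), hvm⟩ : Fin m) ∈ S.preimage emb hembinj.injOn :=
          Finset.mem_preimage.2 (by rw [he]; exact hv)
        rw [hSS''] at h1
        have h2 := Finset.mem_preimage.1 h1
        rwa [he] at h2
      · intro hv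
        have hvm : (v : ℕ) < m := hqS' v hv
        have he : emb ⟨(v : ℕ), hvm⟩ = v := Fin.ext rfl
        have h1 : (⟨(v : ℕ), hvm⟩ : Fin m) ∈ S'.preimage emb hembinj.injOn :=
          Finset.mem_preimage.2 (by rw [he]; exact hv)
        rw [← hSS''] at h1
        have h2 := Finset.mem_preimage.1 h1
        rwa [he] at h2
  -- part 2 : the remaining cliques live inside one of the k independent parts
  have h₂ : (A.filter fun S => ¬ q S).card ≤ k * Nat.choose ((n - m) / k + 1) s := by
    set part : ℕ → Finset (Fin n) :=
      fun j => Finset.univ.filter (fun v : Fin n => m ≤ (v : ℕ) ∧ ((v : ℕ) - m) % k = j)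
      with hpart
    have hpartcard : ∀ j, (part j).card ≤ (n - m) / k + 1 := by
      intro j
      have : (part j).card ≤ (Finset.range ((n - m) / k + 1)).card := by
        refine Finset.card_le_card_of_injOn (fun v => ((v : ℕ) - m) / k) ?_ ?_
        · intro v hv
          simp only [Finset.mem_coe, Finset.mem_range]
          have h1 : (v : ℕ) - m ≤ n - m := by
            have := v.2
            omega
          exact Nat.lt_succ_of_le (Nat.div_le_div_right h1)
        · intro u hu v hv huv
          simp only [Finset.mem_coe, hpart, Finset.mem_filter] at hu hv
          have h1 := Nat.div_add_mod ((u : ℕ) - m) k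
          have h2 := Nat.div_add_mod ((v : ℕ) - m) k
          have huv' : ((u : ℕ) - m) / k = ((v : ℕ) - m) / k := huv
          rw [huv'] at h1
          apply Fin.ext
          omega
      simpa using this
    have hsub : (A.filter fun S => ¬ q S) ⊆
        (Finset.range k).biUnion (fun j => Finset.powersetCard s (part j)) := by
      intro S hS
      have hSA : S ∈ A := (Finset.mem_filter.1 hS).1
      have hSq : ¬ q S := (Finset.mem_filter.1 hS).2
      have hScl : G'ᶜ.IsNClique s S := (Finset.mem_filter.1 hSA).2
      have hSq' : ¬ ∀ v ∈ S, (v : ℕ) < m := hSq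
      push_neg at hSq'
      obtain ⟨v₀, hv₀S, hv₀m⟩ := hSq'
      set j := ((v₀ : ℕ) - m) % k with hj
      have hjk : j < k := Nat.mod_lt _ hk
      rw [Finset.mem_biUnion]
      refine ⟨j, Finset.mem_range.2 hjk, ?_⟩
      rw [Finset.mem_powersetCard]
      refine ⟨?_, hScl.2⟩
      intro u huS
      simp only [hpart, Finset.mem_filter, Finset.mem_univ, true_and]
      have hl := (hlab S hSA u huS v₀ hv₀S).1
      simp only [lab, if_neg (by omega : ¬ (v₀ : ℕ) < m)] at hl
      by_cases hum : (u : ℕ) < m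
      · rw [if_pos hum] at hl
        omega
      · rw [if_neg hum] at hl
        constructor
        · omega
        · omega
    calc (A.filter fun S => ¬ q S).card
        ≤ ((Finset.range k).biUnion (fun j => Finset.powersetCard s (part j))).card :=
          Finset.card_le_card hsub
      _ ≤ ∑ j ∈ Finset.range k, (Finset.powersetCard s (part j)).card :=
          Finset.card_biUnion_le
      _ ≤ ∑ j ∈ Finset.range k, Nat.choose ((n - m) / k + 1) s := by
          apply Finset.sum_le_sum
          intro j hj
          rw [Finset.card_powersetCard]
          exact Nat.choose_le_choose s (hpartcard j)
      _ = k * Nat.choose ((n - m) / k + 1) s := by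
          rw [Finset.sum_const, Finset.card_range, smul_eq_mul]
  calc A.card ≤ _ := hcard
    _ ≤ _ := Nat.add_le_add h₁ h₂

lemma gConst_nonneg {s t : ℕ} (ht : 2 ≤ t) : 0 ≤ gConst s t := by
  have hbd : Filter.IsBoundedUnder (· ≤ ·) Filter.atTop (fun n => gSeq s t n) :=
    ⟨1, Filter.eventually_map.2 (Filter.Eventually.of_forall fun n => gSeq_le_one ht)⟩
  exact le_limsup_of_frequently_le
    (Filter.Frequently.of_forall fun n => gSeq_nonneg ht) hbd

lemma gConst_coboundedUnder (s t : ℕ) (ht : 2 ≤ t) :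
    Filter.IsCoboundedUnder (· ≤ ·) Filter.atTop (fun n => gSeq s t n) := by
  have hbd : Filter.IsBoundedUnder (· ≥ ·) Filter.atTop (fun n => gSeq s t n) :=
    ⟨0, Filter.eventually_map.2 (Filter.Eventually.of_forall fun n => gSeq_nonneg ht)⟩
  exact hbd.isCoboundedUnder_le

lemma lin_ev {a₁ a₂ c₁ c₂ : ℝ} (h : a₁ < a₂) :
    ∀ᶠ n : ℕ in Filter.atTop, a₁ * n + c₁ ≤ a₂ * n + c₂ := by
  have ht : Filter.Tendsto (fun n : ℕ => (a₂ - a₁) * n) Filter.atTop Filter.atTop :=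
    Filter.Tendsto.const_mul_atTop (by linarith) tendsto_natCast_atTop_atTop
  filter_upwards [ht.eventually_ge_atTop (c₁ - c₂)] with n hn
  nlinarith [hn]

lemma gConst_le_gen (s t₀ k : ℕ) (hs : 2 ≤ s) (ht₀ : 2 ≤ t₀) (hk : 1 ≤ k)
    {β b δ : ℝ} (hβ0 : 0 < β) (hβ1 : β ≤ 1) (hδ : 0 < δ) (hb0 : 0 ≤ b)
    (hb : gConst s t₀ < b) :
    gConst s (k + t₀) ≤ b * (β + δ) ^ s + (k : ℝ) * ((1 - β) / k + δ) ^ s := by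
  have hkR : (0:ℝ) < k := by exact_mod_cast hk
  set B : ℝ := b * (β + δ) ^ s + (k : ℝ) * ((1 - β) / k + δ) ^ s with hB
  -- eventually there are good K_{t₀}-free graphs
  have hbdd : Filter.IsBoundedUnder (· ≤ ·) Filter.atTop (fun n => gSeq s t₀ n) :=
    ⟨1, Filter.eventually_map.2 (Filter.Eventually.of_forall fun n => gSeq_le_one ht₀)⟩
  have ev1 : ∀ᶠ M in Filter.atTop, gSeq s t₀ M < b :=
    Filter.eventually_lt_of_limsup_lt hb hbdd
  have evH : ∀ᶠ M in Filter.atTop, ∃ H : SimpleGraph (Fin M),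
      H.CliqueFree t₀ ∧ (kcount s Hᶜ : ℝ) ≤ b * (M.choose s : ℝ) := by
    filter_upwards [ev1, Filter.eventually_ge_atTop s] with M h1 h2
    exact exists_good_graph ht₀ h1 (Nat.choose_pos h2)
  -- the part sizes
  set m : ℕ → ℕ := fun n => ⌊β * n⌋₊ with hm
  have htm : Filter.Tendsto m Filter.atTop Filter.atTop := by
    apply Filter.Tendsto.comp tendsto_nat_floor_atTop
    exact Filter.Tendsto.const_mul_atTop hβ0 tendsto_natCast_atTop_atTop
  have evH' := htm.eventually evH
  have evA : ∀ᶠ n : ℕ in Filter.atTop, β * n ≤ (β + δ) * ((n:ℝ) + 1 - s) := by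
    filter_upwards [lin_ev (c₁ := 0) (c₂ := (β + δ) * (1 - (s:ℝ)))
      (show β < β + δ by linarith)] with n hn
    nlinarith [hn]
  have evB : ∀ᶠ n : ℕ in Filter.atTop,
      ((1 - β) * n + 1) / k + 1 ≤ ((1 - β) / k + δ) * ((n:ℝ) + 1 - s) := by
    have h1 : (1 - β) / k < (1 - β) / k + δ := by linarith
    filter_upwards [lin_ev (c₁ := 1 / k + 1)
      (c₂ := ((1 - β) / k + δ) * (1 - (s:ℝ))) h1] with n hn
    have e : ((1 - β) * n + 1) / k + 1 = (1 - β) / k * n + (1 / k + 1) := by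
      field_simp
      ring
    rw [e]
    nlinarith [hn]
  -- the eventual bound
  have evmain : ∀ᶠ n : ℕ in Filter.atTop, gSeq s (k + t₀) n ≤ B := by
    filter_upwards [evH', evA, evB, Filter.eventually_ge_atTop s,
      Filter.eventually_ge_atTop 1] with n hH hA hB' hns hn1
    obtain ⟨H, hHfree, hHcnt⟩ := hH
    have hmn : m n ≤ n := by
      have : β * n ≤ (n : ℝ) := by nlinarith [Nat.cast_nonneg (α := ℝ) n]
      calc m n ≤ ⌊(n : ℝ)⌋₊ := Nat.floor_le_floor this
        _ = n := Nat.floor_natCast n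
    have hfree : (consGraph (m n) k n H).CliqueFree (k + t₀) :=
      consGraph_cliqueFree hmn (by omega) hk hHfree
    have hw := gSeq_le_witness (s := s) _ hfree
    have hcnt := consGraph_kcount (s := s) hmn hk H
    -- real quantities
    set D : ℝ := (n : ℝ) + 1 - s with hD
    have hDpos : 0 < D := by
      rw [hD]
      have : (s:ℝ) ≤ n := by exact_mod_cast hns
      linarith
    have hfact : (0:ℝ) < (Nat.factorial s : ℝ) := by positivity
    -- numerator bounds
    have hmR : (m n : ℝ) ≤ β * n := Nat.floor_le (by positivity)
    have hchoose_m : ((m n).choose s : ℝ) ≤ (β + δ) ^ s * D ^ s / s.factorial := by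
      calc ((m n).choose s : ℝ) ≤ (m n : ℝ) ^ s / s.factorial := by
            have := Nat.choose_le_pow_div (α := ℝ) s (m n)
            push_cast at this ⊢
            exact this
        _ ≤ ((β + δ) * D) ^ s / s.factorial := by
            gcongr
            exact hmR.trans hA
        _ = (β + δ) ^ s * D ^ s / s.factorial := by rw [mul_pow]
    have hpR : (((n - m n) / k + 1 : ℕ) : ℝ) ≤ ((1 - β) / k + δ) * D := by
      have h1 : (((n - m n) / k : ℕ) : ℝ) ≤ ((n - m n : ℕ) : ℝ) / k := Nat.cast_div_le
      have h2 : ((n - m n : ℕ) : ℝ) = (n : ℝ) - m n := by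
        push_cast [hmn]
        ring
      have h3 : β * n < (m n : ℝ) + 1 := Nat.lt_floor_add_one _
      have h4 : ((n - m n : ℕ) : ℝ) ≤ (1 - β) * n + 1 := by
        rw [h2]; linarith
      have h5 : (((n - m n) / k : ℕ) : ℝ) ≤ ((1 - β) * n + 1) / k := by
        apply h1.trans
        gcongr
      push_cast
      calc (((n - m n) / k : ℕ) : ℝ) + 1 ≤ ((1 - β) * n + 1) / k + 1 := by linarith
        _ ≤ ((1 - β) / k + δ) * D := hB'
    have hchoose_p : ((((n - m n) / k + 1).choose s : ℕ) : ℝ) ≤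
        ((1 - β) / k + δ) ^ s * D ^ s / s.factorial := by
      calc ((((n - m n) / k + 1).choose s : ℕ) : ℝ)
          ≤ (((n - m n) / k + 1 : ℕ) : ℝ) ^ s / s.factorial := by
            have := Nat.choose_le_pow_div (α := ℝ) s ((n - m n) / k + 1)
            push_cast at this ⊢
            exact this
        _ ≤ (((1 - β) / k + δ) * D) ^ s / s.factorial := by
            gcongr
        _ = _ := by rw [mul_pow]
    -- denominator bound
    have hchoose_n : D ^ s / s.factorial ≤ (n.choose s : ℝ) := by
      have := Nat.pow_le_choose (α := ℝ) s n
      have he : ((n + 1 - s : ℕ) : ℝ) = D := by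
        rw [hD]
        push_cast [show s ≤ n + 1 by omega]
        ring
      calc D ^ s / s.factorial = ((n + 1 - s : ℕ) : ℝ) ^ s / s.factorial := by rw [he]
        _ ≤ (n.choose s : ℝ) := by
            push_cast at this ⊢
            exact this
    -- put it together
    have hnum : (kcount s (consGraph (m n) k n H)ᶜ : ℝ) ≤ B * (D ^ s / s.factorial) := by
      calc (kcount s (consGraph (m n) k n H)ᶜ : ℝ)
          ≤ (kcount s Hᶜ : ℝ) + k * ((((n - m n) / k + 1).choose s : ℕ) : ℝ) := by
            exact_mod_cast Nat.cast_le.2 hcnt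
        _ ≤ b * ((m n).choose s : ℝ) + k * ((((n - m n) / k + 1).choose s : ℕ) : ℝ) := by
            gcongr
        _ ≤ b * ((β + δ) ^ s * D ^ s / s.factorial)
            + k * (((1 - β) / k + δ) ^ s * D ^ s / s.factorial) := by
            gcongr
        _ = B * (D ^ s / s.factorial) := by rw [hB]; ring
    have hdpos : (0:ℝ) < D ^ s / s.factorial := by positivity
    have hBpos : 0 ≤ B := by
      rw [hB]
      have h1 : 0 ≤ (β + δ) ^ s := by positivity
      have h2 : 0 ≤ ((1 - β) / k + δ) ^ s := by
        apply pow_nonneg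
        have : 0 ≤ (1 - β) / k := by
          apply div_nonneg _ hkR.le
          linarith
        linarith
      positivity
    calc gSeq s (k + t₀) n ≤ (kcount s (consGraph (m n) k n H)ᶜ : ℝ) / (n.choose s : ℝ) := hw
      _ ≤ (B * (D ^ s / s.factorial)) / (D ^ s / s.factorial) := by
          apply div_le_div₀ (by positivity) hnum hdpos hchoose_n
      _ = B := by
          rw [mul_div_assoc, div_self hdpos.ne']
          ring
  exact limsup_le_of_le (gConst_coboundedUnder s (k + t₀) (by omega)) evmain

lemma gConst_le_eps (s t₀ k : ℕ) (hs : 2 ≤ s) (ht₀ : 2 ≤ t₀) (hk : 1 ≤ k)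
    {b : ℝ} (hb0 : 0 < b) (hb : gConst s t₀ < b) :
    gConst s (k + t₀) ≤ ((k : ℝ) + b ^ (1 / (1 - (s:ℝ)))) ^ (1 - (s:ℝ)) := by
  have hs1 : (1:ℝ) - (s:ℝ) ≠ 0 := by
    have : (2:ℝ) ≤ (s:ℝ) := by exact_mod_cast hs
    intro h
    linarith
  set α : ℝ := b ^ (1 / (1 - (s:ℝ))) with hα
  have hαpos : 0 < α := Real.rpow_pos_of_pos hb0 _
  have hkR : (0:ℝ) < k := by exact_mod_cast hk
  have hkα : (0:ℝ) < (k:ℝ) + α := by positivity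
  set β : ℝ := α / ((k:ℝ) + α) with hβ
  have hβ0 : 0 < β := by positivity
  have hβ1 : β ≤ 1 := by
    rw [hβ, div_le_one hkα]
    linarith
  have hev : ∀ᶠ δ in 𝓝[>] (0:ℝ),
      gConst s (k + t₀) ≤ b * (β + δ)^s + (k:ℝ) * ((1 - β)/k + δ)^s := by
    filter_upwards [self_mem_nhdsWithin] with δ hδ
    exact gConst_le_gen s t₀ k hs ht₀ hk hβ0 hβ1 hδ hb0.le hb
  have hcontf : Continuous (fun δ : ℝ => b * (β + δ)^s + (k:ℝ) * ((1 - β)/k + δ)^s) := by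
    fun_prop
  have hcont : Filter.Tendsto (fun δ : ℝ => b * (β + δ)^s + (k:ℝ) * ((1 - β)/k + δ)^s)
      (𝓝[>] (0:ℝ)) (𝓝 (b * (β + 0)^s + (k:ℝ) * ((1 - β)/k + 0)^s)) :=
    (hcontf.tendsto 0).mono_left nhdsWithin_le_nhds
  have hle := ge_of_tendsto hcont hev
  refine hle.trans (le_of_eq ?_)
  -- algebra
  have h1 : (1:ℝ) - β = (k:ℝ) / ((k:ℝ) + α) := by
    rw [hβ]
    field_simp
    ring
  have h2 : b * α ^ s = α := by
    have e1 : α ^ s = α ^ (s:ℝ) := (Real.rpow_natCast α s).symm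
    have e2 : α ^ (s:ℝ) = b ^ ((1 / (1 - (s:ℝ))) * s) := by
      rw [hα, ← Real.rpow_mul hb0.le]
    have e3 : b * b ^ ((1 / (1 - (s:ℝ))) * s) = b ^ (1 + (1 / (1 - (s:ℝ))) * s) := by
      rw [Real.rpow_add hb0, Real.rpow_one]
    have e4 : 1 + (1 / (1 - (s:ℝ))) * s = 1 / (1 - (s:ℝ)) := by
      field_simp
      ring
    rw [e1, e2, e3, e4, hα]
  have h3 : ((k:ℝ) + α) ^ (1 - (s:ℝ)) = ((k:ℝ) + α) / ((k:ℝ) + α) ^ s := by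
    rw [Real.rpow_sub hkα, Real.rpow_one, Real.rpow_natCast]
  have h4 : ((k:ℝ) / ((k:ℝ) + α)) / k = 1 / ((k:ℝ) + α) := by
    rw [div_div, mul_comm, ← div_div, div_self hkR.ne']
  have hne : ((k:ℝ) + α) ^ s ≠ 0 := by positivity
  rw [add_zero, add_zero, h1, h4, h3, hβ, div_pow, div_pow, one_pow]
  field_simp
  linear_combination h2

lemma gConst_le_final (s t₀ k : ℕ) (hs : 2 ≤ s) (ht₀ : 2 ≤ t₀) (hk : 1 ≤ k)
    (hpos : 0 < gConst s t₀) :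
    gConst s (k + t₀) ≤ ((k : ℝ) + gConst s t₀ ^ (1 / (1 - (s:ℝ)))) ^ (1 - (s:ℝ)) := by
  set c : ℝ := gConst s t₀ with hc
  set e : ℝ := 1 / (1 - (s:ℝ)) with he
  have hkR : (0:ℝ) < k := by exact_mod_cast hk
  have hev : ∀ᶠ ε in 𝓝[>] (0:ℝ),
      gConst s (k + t₀) ≤ ((k : ℝ) + (c + ε) ^ e) ^ (1 - (s:ℝ)) := by
    filter_upwards [self_mem_nhdsWithin] with ε hε
    have hε' : (0:ℝ) < ε := hε
    exact gConst_le_eps s t₀ k hs ht₀ hk (b := c + ε) (by linarith)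
      (by rw [← hc]; linarith)
  have hA : ContinuousAt (fun ε : ℝ => c + ε) 0 := by fun_prop
  have hB : ContinuousAt (fun ε : ℝ => (c + ε) ^ e) 0 :=
    hA.rpow_const (Or.inl (by simpa using hpos.ne'))
  have hC : ContinuousAt (fun ε : ℝ => (k : ℝ) + (c + ε) ^ e) 0 :=
    continuousAt_const.add hB
  have hD : ContinuousAt (fun ε : ℝ => ((k : ℝ) + (c + ε) ^ e) ^ (1 - (s:ℝ))) 0 := by
    apply hC.rpow_const
    left
    have : (0:ℝ) < (k : ℝ) + (c + 0) ^ e := by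
      have := Real.rpow_pos_of_pos (show (0:ℝ) < c + 0 by simpa using hpos) e
      positivity
    exact this.ne'
  have hcont : Filter.Tendsto (fun ε : ℝ => ((k : ℝ) + (c + ε) ^ e) ^ (1 - (s:ℝ)))
      (𝓝[>] (0:ℝ)) (𝓝 (((k : ℝ) + (c + 0) ^ e) ^ (1 - (s:ℝ)))) :=
    hD.tendsto.mono_left nhdsWithin_le_nhds
  have := ge_of_tendsto hcont hev
  simpa using this

/-- Given `s, t₀ ≥ 2` with `g_{s,t₀} > 0`, for every `t ≥ t₀` one has
`g_{s,t} ≤ (t − t₀ + g_{s,t₀}^{1/(1−s)})^{1−s}`; in particular, if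
`g_{s,t₀} < (t₀ − 1)^{1−s}` then `g_{s,t} < (t − 1)^{1−s}` for all `t ≥ t₀`. -/
theorem gConst_add_vertex (s t₀ : ℕ) (hs : 2 ≤ s) (ht₀ : 2 ≤ t₀)
    (hpos : 0 < gConst s t₀) :
    (∀ t : ℕ, t₀ ≤ t →
      gConst s t ≤
        ((t : ℝ) - (t₀ : ℝ) + gConst s t₀ ^ (1 / (1 - (s : ℝ)))) ^ (1 - (s : ℝ))) ∧
    (gConst s t₀ < ((t₀ : ℝ) - 1) ^ (1 - (s : ℝ)) →
      ∀ t : ℕ, t₀ ≤ t → gConst s t < ((t : ℝ) - 1) ^ (1 - (s : ℝ))) := by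
  have hs1 : (1:ℝ) - (s:ℝ) < 0 := by
    have : (2:ℝ) ≤ (s:ℝ) := by exact_mod_cast hs
    linarith
  set c : ℝ := gConst s t₀ with hc
  set e : ℝ := 1 / (1 - (s:ℝ)) with he
  have hene : (1:ℝ) - (s:ℝ) ≠ 0 := hs1.ne
  have hcepos : 0 < c ^ e := Real.rpow_pos_of_pos hpos e
  have part1 : ∀ t : ℕ, t₀ ≤ t →
      gConst s t ≤ ((t : ℝ) - (t₀ : ℝ) + c ^ e) ^ (1 - (s : ℝ)) := by
    intro t ht
    rcases eq_or_lt_of_le ht with rfl | hlt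
    · -- t = t₀ : the bound is exactly c
      have hcast : (t₀ : ℝ) - (t₀ : ℝ) + c ^ e = c ^ e := by ring
      rw [hcast]
      have h2 : (c ^ e) ^ (1 - (s:ℝ)) = c := by
        rw [← Real.rpow_mul hpos.le, show e * (1 - (s:ℝ)) = 1 by rw [he]; field_simp,
          Real.rpow_one]
      rw [h2]
    · have hk : 1 ≤ t - t₀ := by omega
      have := gConst_le_final s t₀ (t - t₀) hs ht₀ hk hpos
      have hcast : ((t - t₀ : ℕ) : ℝ) = (t : ℝ) - (t₀ : ℝ) := by
        push_cast [le_of_lt hlt]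
        ring
      rw [show (t - t₀) + t₀ = t by omega, hcast] at this
      exact this
  refine ⟨part1, ?_⟩
  intro hsmall t ht
  have ht₀1 : (1:ℝ) ≤ (t₀ : ℝ) - 1 := by
    have : (2:ℝ) ≤ (t₀:ℝ) := by exact_mod_cast ht₀
    linarith
  have ht₀pos : (0:ℝ) < (t₀ : ℝ) - 1 := by linarith
  have hepos : e < 0 := by
    rw [he]
    apply div_neg_of_pos_of_neg one_pos hs1
  -- c^e > t₀ - 1
  have hkey : (t₀ : ℝ) - 1 < c ^ e := by
    have h1 := Real.rpow_lt_rpow_of_neg hpos hsmall hepos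
    have h2 : (((t₀ : ℝ) - 1) ^ ((1:ℝ) - s)) ^ e = (t₀ : ℝ) - 1 := by
      rw [← Real.rpow_mul ht₀pos.le]
      rw [show ((1:ℝ) - s) * e = 1 by rw [he]; field_simp]
      exact Real.rpow_one _
    rwa [h2] at h1
  have htR : (t₀ : ℝ) ≤ (t : ℝ) := by exact_mod_cast ht
  have htpos : (0:ℝ) < (t:ℝ) - 1 := by linarith
  have hlt2 : (t : ℝ) - 1 < (t : ℝ) - (t₀ : ℝ) + c ^ e := by linarith
  calc gConst s t ≤ ((t : ℝ) - (t₀ : ℝ) + c ^ e) ^ (1 - (s : ℝ)) := part1 t ht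
    _ < ((t : ℝ) - 1) ^ (1 - (s : ℝ)) := Real.rpow_lt_rpow_of_neg htpos hlt2 hs1
end
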